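/- Let X be an ordered Banach space with generating cone and Z a Banach lattice. Assume there exist a positive operator J ∈ L(X, Z) and a sequence of positive operators (R_n) ⊆ L(Z, X) such that R_n J → id_X in the weak operator topology. Then for every x' in span(X'_+) ⊆ X', the element x' has a modulus in span(X'_+); consequently span(X'_+) is a vector lattice. -/

import Mathlib

open Filter Topology

/-- `f` is a positive functional with respect to the cone `P`. -/
def dualPos {X : Type*} [NormedAddCommGroup X] [NormedSpace ℝ X]
    (P : Set X) (f : X →L[ℝ] ℝ) : Prop := ∀ x ∈ P, 0 ≤ f x

/-- `f` lies in the span `X'₊ - X'₊` of the dual cone. -/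
def inDualSpan {X : Type*} [NormedAddCommGroup X] [NormedSpace ℝ X]
    (P : Set X) (f : X →L[ℝ] ℝ) : Prop :=
  ∃ g, dualPos P g ∧ ∃ h, dualPos P h ∧ f = g - h

/-- The dual order on `X'` induced by the cone `P ⊆ X`. -/
def dualLE {X : Type*} [NormedAddCommGroup X] [NormedSpace ℝ X]
    (P : Set X) (f g : X →L[ℝ] ℝ) : Prop := ∀ x ∈ P, f x ≤ g x


section RK

variable {Z : Type*} [NormedAddCommGroup Z] [Lattice Z] [IsOrderedAddMonoid Z] [HasSolidNorm Z]
    [NormedSpace ℝ Z]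

/-- The set `φ '' [0, z]` used in the Riesz–Kantorovich construction. -/
def rkSet (φ : Z →L[ℝ] ℝ) (z : Z) : Set ℝ := φ '' Set.Icc 0 z

/-- `sup { φ w : 0 ≤ w ≤ z }`. -/
noncomputable def rkSup (φ : Z →L[ℝ] ℝ) (z : Z) : ℝ := sSup (rkSet φ z)

lemma rkSet_nonempty (φ : Z →L[ℝ] ℝ) {z : Z} (hz : 0 ≤ z) : (rkSet φ z).Nonempty :=
  ⟨φ 0, 0, ⟨le_refl 0, hz⟩, rfl⟩

lemma rkSet_bddAbove (φ : Z →L[ℝ] ℝ) (z : Z) : BddAbove (rkSet φ z) := by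
  refine ⟨‖φ‖ * ‖z‖, ?_⟩
  rintro r ⟨w, ⟨hw0, hwz⟩, rfl⟩
  have habs : |w| ≤ |z| := by
    rw [abs_of_nonneg hw0]
    exact hwz.trans (le_abs_self z)
  calc φ w ≤ |φ w| := le_abs_self _
    _ = ‖φ w‖ := (Real.norm_eq_abs _).symm
    _ ≤ ‖φ‖ * ‖w‖ := φ.le_opNorm w
    _ ≤ ‖φ‖ * ‖z‖ := by
        exact mul_le_mul_of_nonneg_left (norm_le_norm_of_abs_le_abs habs) (norm_nonneg φ)

lemma le_rkSup (φ : Z →L[ℝ] ℝ) {w z : Z} (hw0 : 0 ≤ w) (hwz : w ≤ z) : φ w ≤ rkSup φ z :=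
  le_csSup (rkSet_bddAbove φ z) ⟨w, ⟨hw0, hwz⟩, rfl⟩

lemma rkSup_le (φ : Z →L[ℝ] ℝ) {z : Z} (hz : 0 ≤ z) {B : ℝ}
    (h : ∀ w, 0 ≤ w → w ≤ z → φ w ≤ B) : rkSup φ z ≤ B := by
  refine csSup_le (rkSet_nonempty φ hz) ?_
  rintro r ⟨w, ⟨hw0, hwz⟩, rfl⟩
  exact h w hw0 hwz

lemma rkSup_nonneg (φ : Z →L[ℝ] ℝ) {z : Z} (hz : 0 ≤ z) : 0 ≤ rkSup φ z := by
  have := le_rkSup φ (le_refl (0 : Z)) hz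
  simpa using this

lemma rkSup_zero (φ : Z →L[ℝ] ℝ) : rkSup φ 0 = 0 := by
  refine le_antisymm (rkSup_le φ le_rfl fun w hw0 hwz => ?_) (rkSup_nonneg φ le_rfl)
  have : w = 0 := le_antisymm hwz hw0
  simp [this]

lemma rkSup_le_norm (φ : Z →L[ℝ] ℝ) {z : Z} (hz : 0 ≤ z) : rkSup φ z ≤ ‖φ‖ * ‖z‖ := by
  refine rkSup_le φ hz fun w hw0 hwz => ?_
  have habs : |w| ≤ |z| := by
    rw [abs_of_nonneg hw0]
    exact hwz.trans (le_abs_self z)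
  calc φ w ≤ |φ w| := le_abs_self _
    _ = ‖φ w‖ := (Real.norm_eq_abs _).symm
    _ ≤ ‖φ‖ * ‖w‖ := φ.le_opNorm w
    _ ≤ ‖φ‖ * ‖z‖ :=
        mul_le_mul_of_nonneg_left (norm_le_norm_of_abs_le_abs habs) (norm_nonneg φ)

/-- Riesz decomposition in a lattice ordered group. -/
lemma riesz_decomp {y z w : Z} (hy : 0 ≤ y) (hz : 0 ≤ z) (h0 : 0 ≤ w) (hw : w ≤ y + z) :
    ∃ u v, 0 ≤ u ∧ u ≤ y ∧ 0 ≤ v ∧ v ≤ z ∧ w = u + v := by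
  refine ⟨w ⊓ y, w - w ⊓ y, le_inf h0 hy, inf_le_right, sub_nonneg.2 inf_le_left, ?_, by abel⟩
  have h1 : w ⊓ y + (w ⊔ y) = w + y := inf_add_sup w y
  have h2 : w - w ⊓ y = w ⊔ y - y := by
    rw [sub_eq_sub_iff_add_eq_add, add_comm (w ⊔ y) (w ⊓ y), h1]
  rw [h2, sub_le_iff_le_add]
  exact sup_le (hw.trans (by rw [add_comm])) (le_add_of_nonneg_left hz)

end RK

section RK2

variable {Z : Type*} [NormedAddCommGroup Z] [Lattice Z] [IsOrderedAddMonoid Z] [HasSolidNorm Z]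
    [NormedSpace ℝ Z]

lemma rkSup_add (φ : Z →L[ℝ] ℝ) {y z : Z} (hy : 0 ≤ y) (hz : 0 ≤ z) :
    rkSup φ (y + z) = rkSup φ y + rkSup φ z := by
  refine le_antisymm ?_ ?_
  · refine rkSup_le φ (add_nonneg hy hz) fun w hw0 hw => ?_
    obtain ⟨u, v, hu0, huy, hv0, hvz, rfl⟩ := riesz_decomp hy hz hw0 hw
    rw [map_add]
    exact add_le_add (le_rkSup φ hu0 huy) (le_rkSup φ hv0 hvz)
  · rw [← sub_nonneg]
    have key : ∀ u : Z, 0 ≤ u → u ≤ y → φ u ≤ rkSup φ (y + z) - rkSup φ z := by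
      intro u hu0 huy
      rw [le_sub_iff_add_le, add_comm, ← le_sub_iff_add_le]
      refine rkSup_le φ hz fun v hv0 hvz => ?_
      rw [le_sub_iff_add_le, ← map_add]
      exact le_rkSup φ (add_nonneg hv0 hu0) ((add_le_add hvz huy).trans_eq (add_comm _ _))
    have := rkSup_le φ hy key
    linarith

/-- Auxiliary function: the positive part of `φ` as a function. -/
noncomputable def rkPos (φ : Z →L[ℝ] ℝ) (x : Z) : ℝ := rkSup φ x⁺ - rkSup φ x⁻

lemma rkPos_eq (φ : Z →L[ℝ] ℝ) {u v x : Z} (hu : 0 ≤ u) (hv : 0 ≤ v) (hx : x = u - v) :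
    rkPos φ x = rkSup φ u - rkSup φ v := by
  have h1 : x⁺ - x⁻ = u - v := by rw [posPart_sub_negPart, hx]
  have key : x⁺ + v = u + x⁻ := sub_eq_sub_iff_add_eq_add.mp h1
  have e1 := rkSup_add φ (posPart_nonneg x) hv
  have e2 := rkSup_add φ hu (negPart_nonneg x)
  rw [key, e2] at e1
  unfold rkPos
  linarith

lemma rkPos_add (φ : Z →L[ℝ] ℝ) (a b : Z) : rkPos φ (a + b) = rkPos φ a + rkPos φ b := by
  have h1 := rkPos_eq φ (add_nonneg (posPart_nonneg a) (posPart_nonneg b))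
    (add_nonneg (negPart_nonneg a) (negPart_nonneg b))
    (x := a + b) (by rw [show a⁺ + b⁺ - (a⁻ + b⁻) = (a⁺ - a⁻) + (b⁺ - b⁻) by abel,
      posPart_sub_negPart, posPart_sub_negPart])
  rw [h1, rkSup_add φ (posPart_nonneg a) (posPart_nonneg b),
    rkSup_add φ (negPart_nonneg a) (negPart_nonneg b)]
  unfold rkPos
  ring

lemma abs_rkPos_le (φ : Z →L[ℝ] ℝ) (x : Z) : |rkPos φ x| ≤ 2 * ‖φ‖ * ‖x‖ := by
  have h1 : ‖x⁺‖ ≤ ‖x‖ := by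
    refine norm_le_norm_of_abs_le_abs ?_
    rw [abs_of_nonneg (posPart_nonneg x)]
    exact sup_le (le_abs_self x) (abs_nonneg x)
  have h2 : ‖x⁻‖ ≤ ‖x‖ := by
    refine norm_le_norm_of_abs_le_abs ?_
    rw [abs_of_nonneg (negPart_nonneg x)]
    exact sup_le (neg_le_abs x) (abs_nonneg x)
  have p1 : 0 ≤ rkSup φ x⁺ := rkSup_nonneg φ (posPart_nonneg x)
  have p2 : 0 ≤ rkSup φ x⁻ := rkSup_nonneg φ (negPart_nonneg x)
  have q1 : rkSup φ x⁺ ≤ ‖φ‖ * ‖x‖ :=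
    (rkSup_le_norm φ (posPart_nonneg x)).trans
      (mul_le_mul_of_nonneg_left h1 (norm_nonneg φ))
  have q2 : rkSup φ x⁻ ≤ ‖φ‖ * ‖x‖ :=
    (rkSup_le_norm φ (negPart_nonneg x)).trans
      (mul_le_mul_of_nonneg_left h2 (norm_nonneg φ))
  rw [abs_le]
  constructor <;> · unfold rkPos; linarith

/-- The positive part of a continuous functional on a Banach lattice
(Riesz–Kantorovich). -/
noncomputable def latticePosPart (φ : Z →L[ℝ] ℝ) : Z →L[ℝ] ℝ :=
  AddMonoidHom.toRealLinearMap
    { toFun := rkPos φ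
      map_zero' := by
        have := rkPos_eq φ (le_refl (0:Z)) (le_refl (0:Z)) (x := 0) (by simp)
        simpa [rkSup_zero] using this
      map_add' := rkPos_add φ }
    (by
      refine (LipschitzWith.of_dist_le_mul (K := ⟨2 * ‖φ‖, by positivity⟩)
        (f := rkPos φ) fun a b => ?_).continuous
      have hadd := rkPos_add φ (a - b) b
      simp only [sub_add_cancel] at hadd
      have : rkPos φ a - rkPos φ b = rkPos φ (a - b) := by linarith
      rw [Real.dist_eq, this, dist_eq_norm]
      exact (abs_rkPos_le φ (a - b)).trans le_rfl)

lemma latticePosPart_apply (φ : Z →L[ℝ] ℝ) {z : Z} (hz : 0 ≤ z) :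
    latticePosPart φ z = rkSup φ z := by
  have := rkPos_eq φ hz (le_refl (0:Z)) (x := z) (by simp)
  simpa [latticePosPart, AddMonoidHom.toRealLinearMap, rkSup_zero] using this

end RK2

/-- Let `X` be an ordered Banach space with generating (closed) cone `P` and
`Z` a Banach lattice. Assume there are a positive operator `J : X → Z` and positive
operators `Rₙ : Z → X` with `Rₙ J → id_X` in the weak operator topology. Then every
`f ∈ span(X'₊)` has a modulus (a supremum of `f` and `-f`) in `span(X'₊)`; consequently
any two elements of `span(X'₊)` have a supremum therein, i.e. `span(X'₊)` is a vector
lattice. -/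
theorem stmt9 {X Z : Type*}
    [NormedAddCommGroup X] [NormedSpace ℝ X] [CompleteSpace X]
    [NormedAddCommGroup Z] [Lattice Z] [IsOrderedAddMonoid Z] [HasSolidNorm Z]
    [NormedSpace ℝ Z] [CompleteSpace Z]
    (P : Set X) (hPclosed : IsClosed P)
    (hPadd : ∀ x ∈ P, ∀ y ∈ P, x + y ∈ P)
    (hPsmul : ∀ (a : ℝ), 0 ≤ a → ∀ x ∈ P, a • x ∈ P)
    (hPpointed : ∀ x ∈ P, -x ∈ P → x = 0)
    (hgen : ∀ x : X, ∃ y ∈ P, ∃ z ∈ P, x = y - z)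
    (J : X →L[ℝ] Z) (hJ : ∀ x ∈ P, 0 ≤ J x)
    (R : ℕ → Z →L[ℝ] X) (hR : ∀ n, ∀ z : Z, 0 ≤ z → R n z ∈ P)
    (hWOT : ∀ (x : X) (φ : X →L[ℝ] ℝ),
      Tendsto (fun n => φ (R n (J x))) atTop (𝓝 (φ x))) :
    (∀ f : X →L[ℝ] ℝ, inDualSpan P f →
      ∃ m : X →L[ℝ] ℝ, dualPos P m ∧ dualLE P f m ∧ dualLE P (-f) m ∧
        ∀ u : X →L[ℝ] ℝ, inDualSpan P u → dualLE P f u → dualLE P (-f) u →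
          dualLE P m u) ∧
    (∀ f g : X →L[ℝ] ℝ, inDualSpan P f → inDualSpan P g →
      ∃ s : X →L[ℝ] ℝ, inDualSpan P s ∧ dualLE P f s ∧ dualLE P g s ∧
        ∀ u : X →L[ℝ] ℝ, inDualSpan P u → dualLE P f u → dualLE P g u →
          dualLE P s u) := by
  -- Strengthened modulus claim: minimality holds against *all* upper bounds.
  have key : ∀ f : X →L[ℝ] ℝ, inDualSpan P f →
      ∃ m : X →L[ℝ] ℝ, dualPos P m ∧ dualLE P f m ∧ dualLE P (-f) m ∧
        ∀ u : X →L[ℝ] ℝ, dualLE P f u → dualLE P (-f) u → dualLE P m u := by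
    intro f hfspan
    obtain ⟨g, hg, h, hh, hf⟩ := hfspan
    have hfx : ∀ y : X, f y = g y - h y := fun y => by rw [hf]; simp
    set φ : ℕ → Z →L[ℝ] ℝ := fun n => (2:ℝ) • (f.comp (R n)) with hφ
    have hφapp : ∀ n (w : Z), φ n w = 2 * f (R n w) := fun n w => by
      simp [hφ]
    set q : ℕ → Z →L[ℝ] ℝ := fun n => latticePosPart (φ n) with hq
    set m' : ℕ → X →L[ℝ] ℝ := fun n =>
      (q n).comp J - (f.comp ((R n).comp J)) with hm'
    have hm'app : ∀ n x, m' n x = q n (J x) - f (R n (J x)) := fun n x => by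
      simp [hm']
    -- evaluation of q on the cone
    have hqx : ∀ n x, x ∈ P → q n (J x) = rkSup (φ n) (J x) := fun n x hx =>
      latticePosPart_apply (φ n) (hJ x hx)
    have hq0 : ∀ n x, x ∈ P → 0 ≤ q n (J x) := fun n x hx => by
      rw [hqx n x hx]; exact rkSup_nonneg _ (hJ x hx)
    have hq2f : ∀ n x, x ∈ P → 2 * f (R n (J x)) ≤ q n (J x) := fun n x hx => by
      rw [hqx n x hx, ← hφapp n (J x)]
      exact le_rkSup _ (hJ x hx) le_rfl
    have hsplit : ∀ n x (w : Z), w ≤ J x →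
        R n (J x) = R n w + R n (J x - w) := by
      intro n x w _
      rw [← map_add, add_sub_cancel]
    have hqub : ∀ n x, x ∈ P → q n (J x) ≤ 2 * g (R n (J x)) := by
      intro n x hx
      rw [hqx n x hx]
      refine rkSup_le _ (hJ x hx) fun w hw0 hwz => ?_
      rw [hφapp]
      have hw' : (0:Z) ≤ J x - w := sub_nonneg.2 hwz
      have e1 : g (R n (J x)) = g (R n w) + g (R n (J x - w)) := by
        rw [hsplit n x w hwz, map_add]
      have p1 : 0 ≤ g (R n (J x - w)) := hg _ (hR n _ hw')
      have p2 : 0 ≤ h (R n w) := hh _ (hR n _ hw0)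
      have := hfx (R n w)
      linarith
    -- positivity of m' on P
    have hm'pos : ∀ n x, x ∈ P → 0 ≤ m' n x := by
      intro n x hx
      have := hq0 n x hx
      have := hq2f n x hx
      rw [hm'app]
      linarith
    -- pointwise boundedness
    have hbddP : ∀ x ∈ P, ∃ C, ∀ n, ‖m' n x‖ ≤ C := by
      intro x hx
      obtain ⟨C, hC⟩ := (hWOT x ((2:ℝ) • g - f)).bddAbove_range
      refine ⟨C, fun n => ?_⟩
      have h1 : ((2:ℝ) • g - f) (R n (J x)) ≤ C :=
        hC (Set.mem_range_self n)
      have h2 : ((2:ℝ) • g - f) (R n (J x)) = 2 * g (R n (J x)) - f (R n (J x)) := by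
        simp
      have h3 := hqub n x hx
      have h4 := hm'pos n x hx
      rw [Real.norm_eq_abs, abs_of_nonneg h4, hm'app]
      linarith [hm'app n x]
    have hbdd : ∀ x : X, ∃ C, ∀ n, ‖m' n x‖ ≤ C := by
      intro x
      obtain ⟨y, hy, z, hz, rfl⟩ := hgen x
      obtain ⟨Cy, hCy⟩ := hbddP y hy
      obtain ⟨Cz, hCz⟩ := hbddP z hz
      refine ⟨Cy + Cz, fun n => ?_⟩
      have : m' n (y - z) = m' n y - m' n z := map_sub _ _ _
      rw [this]
      exact (norm_sub_le _ _).trans (add_le_add (hCy n) (hCz n))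
    obtain ⟨C', hC'⟩ := banach_steinhaus hbdd
    have hnorm : ∀ n x, ‖m' n x‖ ≤ C' * ‖x‖ := fun n x =>
      ((m' n).le_opNorm x).trans
        (mul_le_mul_of_nonneg_right (hC' n) (norm_nonneg x))
    -- limit along an ultrafilter extending atTop
    set U : Ultrafilter ℕ := Ultrafilter.of atTop with hUdef
    have hUle : (U : Filter ℕ) ≤ atTop := Ultrafilter.of_le _
    have hWOTU : ∀ (x : X) (ψ : X →L[ℝ] ℝ),
        Tendsto (fun n => ψ (R n (J x))) (U : Filter ℕ) (𝓝 (ψ x)) :=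
      fun x ψ => (hWOT x ψ).mono_left hUle
    have hlim : ∀ x : X, ∃ lx : ℝ,
        Tendsto (fun n => m' n x) (U : Filter ℕ) (𝓝 lx) := by
      intro x
      have hmem : ∀ n, m' n x ∈ Set.Icc (-(C' * ‖x‖)) (C' * ‖x‖) := by
        intro n
        have := hnorm n x
        rw [Real.norm_eq_abs, abs_le] at this
        exact this
      have hle : (Ultrafilter.map (fun n => m' n x) U : Filter ℝ) ≤
          Filter.principal (Set.Icc (-(C' * ‖x‖)) (C' * ‖x‖)) := by
        rw [Filter.le_principal_iff]
        exact Filter.mem_map.2 (Filter.Eventually.of_forall hmem)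
      obtain ⟨lx, -, hlx⟩ :=
        isCompact_Icc.ultrafilter_le_nhds (Ultrafilter.map (fun n => m' n x) U) hle
      exact ⟨lx, hlx⟩
    choose l hl using hlim
    have hadd : ∀ x y : X, l (x + y) = l x + l y := by
      intro x y
      refine tendsto_nhds_unique (hl (x + y)) ?_
      have : (fun n => m' n (x + y)) = fun n => m' n x + m' n y := by
        funext n; exact map_add _ _ _
      rw [this]
      exact (hl x).add (hl y)
    have hsmul : ∀ (c : ℝ) (x : X), l (c • x) = c * l x := by
      intro c x
      refine tendsto_nhds_unique (hl (c • x)) ?_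
      have : (fun n => m' n (c • x)) = fun n => c * m' n x := by
        funext n; rw [map_smul]; simp
      rw [this]
      exact (hl x).const_mul c
    have hbound : ∀ x : X, ‖l x‖ ≤ C' * ‖x‖ := by
      intro x
      have habs : Tendsto (fun n => ‖m' n x‖) (U : Filter ℕ) (𝓝 ‖l x‖) :=
        (hl x).norm
      exact le_of_tendsto habs (Filter.Eventually.of_forall fun n => hnorm n x)
    set mL : X →ₗ[ℝ] ℝ :=
      { toFun := l, map_add' := hadd, map_smul' := hsmul } with hmL
    set m : X →L[ℝ] ℝ := LinearMap.mkContinuous mL C' hbound with hm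
    have hmapp : ∀ x, m x = l x := fun x => rfl
    refine ⟨m, ?_, ?_, ?_, ?_⟩
    · -- positivity
      intro x hx
      rw [hmapp]
      exact ge_of_tendsto (hl x)
        (Filter.Eventually.of_forall fun n => hm'pos n x hx)
    · -- f ≤ m
      intro x hx
      rw [hmapp]
      refine le_of_tendsto_of_tendsto' (hWOTU x f) (hl x) fun n => ?_
      have := hq2f n x hx
      rw [hm'app]
      linarith
    · -- -f ≤ m
      intro x hx
      rw [hmapp, ContinuousLinearMap.neg_apply]
      have hneg : Tendsto (fun n => -(f (R n (J x)))) (U : Filter ℕ) (𝓝 (-(f x))) :=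
        (hWOTU x f).neg
      refine le_of_tendsto_of_tendsto' hneg (hl x) fun n => ?_
      have := hq0 n x hx
      rw [hm'app]
      linarith
    · -- minimality
      intro u hfu hnfu x hx
      rw [hmapp]
      refine le_of_tendsto_of_tendsto' (hl x) (hWOTU x u) fun n => ?_
      rw [hm'app]
      have hqb : q n (J x) ≤ f (R n (J x)) + u (R n (J x)) := by
        rw [hqx n x hx]
        refine rkSup_le _ (hJ x hx) fun w hw0 hwz => ?_
        rw [hφapp]
        have hw' : (0:Z) ≤ J x - w := sub_nonneg.2 hwz
        have e1 : f (R n (J x)) = f (R n w) + f (R n (J x - w)) := by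
          rw [hsplit n x w hwz, map_add]
        have e2 : u (R n (J x)) = u (R n w) + u (R n (J x - w)) := by
          rw [hsplit n x w hwz, map_add]
        have p1 : f (R n w) ≤ u (R n w) := hfu _ (hR n _ hw0)
        have p2 : -(f (R n (J x - w))) ≤ u (R n (J x - w)) := by
          have := hnfu _ (hR n _ hw')
          simpa using this
        linarith
      linarith
  constructor
  · intro f hf
    obtain ⟨m, h1, h2, h3, h4⟩ := key f hf
    exact ⟨m, h1, h2, h3, fun u _ hu1 hu2 => h4 u hu1 hu2⟩
  · intro f g hf hg
    obtain ⟨g1, hg1, h1, hh1, hf1⟩ := hf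
    obtain ⟨g2, hg2, h2, hh2, hf2⟩ := hg
    have hfg : inDualSpan P (f - g) := by
      refine ⟨g1 + h2, fun x hx => ?_, h1 + g2, fun x hx => ?_, ?_⟩
      · simp only [ContinuousLinearMap.add_apply]
        exact add_nonneg (hg1 x hx) (hh2 x hx)
      · simp only [ContinuousLinearMap.add_apply]
        exact add_nonneg (hh1 x hx) (hg2 x hx)
      · rw [hf1, hf2]; abel
    obtain ⟨m, hm1, hm2, hm3, hm4⟩ := key (f - g) hfg
    set s : X →L[ℝ] ℝ := (1/2 : ℝ) • (m + f + g) with hs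
    have hsx : ∀ x, s x = (m x + f x + g x) / 2 := by
      intro x
      simp only [hs, ContinuousLinearMap.smul_apply, ContinuousLinearMap.add_apply,
        smul_eq_mul]
      ring
    refine ⟨s, ?_, ?_, ?_, ?_⟩
    · refine ⟨(1/2 : ℝ) • (m + g1 + g2), fun x hx => ?_,
        (1/2 : ℝ) • (h1 + h2), fun x hx => ?_, ?_⟩
      · simp only [ContinuousLinearMap.smul_apply, ContinuousLinearMap.add_apply,
          smul_eq_mul]
        have := hm1 x hx
        have := hg1 x hx
        have := hg2 x hx
        linarith
      · simp only [ContinuousLinearMap.smul_apply, ContinuousLinearMap.add_apply,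
          smul_eq_mul]
        have := hh1 x hx
        have := hh2 x hx
        linarith
      · rw [hs, hf1, hf2]
        ext x
        simp only [ContinuousLinearMap.smul_apply, ContinuousLinearMap.add_apply,
          ContinuousLinearMap.sub_apply, smul_eq_mul]
        ring
    · intro x hx
      have := hm2 x hx
      simp only [ContinuousLinearMap.sub_apply] at this
      rw [hsx]
      linarith
    · intro x hx
      have := hm3 x hx
      simp only [ContinuousLinearMap.neg_apply, ContinuousLinearMap.sub_apply] at this
      rw [hsx]
      linarith
    · intro u _ hfu hgu x hx
      have hub1 : dualLE P (f - g) ((2:ℝ) • u - f - g) := by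
        intro y hy
        have := hfu y hy
        have := hgu y hy
        simp only [ContinuousLinearMap.sub_apply, ContinuousLinearMap.smul_apply,
          smul_eq_mul]
        linarith
      have hub2 : dualLE P (-(f - g)) ((2:ℝ) • u - f - g) := by
        intro y hy
        have := hfu y hy
        have := hgu y hy
        simp only [ContinuousLinearMap.neg_apply, ContinuousLinearMap.sub_apply,
          ContinuousLinearMap.smul_apply, smul_eq_mul]
        linarith
      have := hm4 _ hub1 hub2 x hx
      simp only [ContinuousLinearMap.sub_apply, ContinuousLinearMap.smul_apply,
        smul_eq_mul] at this
      rw [hsx]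
      linarith
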